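/- Let H and A be finite groups with A commutative, let φ : H → Aut(A) be an action of H on A, and let G = A ⋊_φ H be the semidirect product, with canonical section σ : H → G, σ(h) = (1, h). Let χ : H → A be a map satisfying the 1-cocycle condition χ(h₁h₂) = χ(h₁) · φ(h₁)(χ(h₂)) for all h₁, h₂ ∈ H. Assume: (i) there is no a ∈ A with χ(h) = a · (φ(h)(a))⁻¹ for all h ∈ H (χ is not a 1-coboundary on H); and (ii) for every h ∈ H there exists a ∈ A such that χ(k) = a · (φ(k)(a))⁻¹ for every k in the cyclic subgroup generated by h (χ restricts to a 1-coboundary on every cyclic subgroup). Then the map h ↦ (χ(h), h) is a group homomorphism H → G, and its image (χ·σ)(H) and the image σ(H) are subgroups of G that are Gassmann equivalent in G but not conjugate in G. -/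

import Mathlib

/-- Two subgroups `H` and `H'` of a group `G` are Gassmann equivalent if every
`g : G` is conjugate to the same number of elements of `H` as of `H'`. -/
def IsGassmannEquiv {G : Type*} [Group G] (H H' : Subgroup G) : Prop :=
  ∀ g : G, Nat.card {h : H // IsConj g (h : G)} = Nat.card {h : H' // IsConj g (h : G)}

lemma card_conj_range {G H : Type*} [Group G] [Group H] (f : H →* G)
    (hf : Function.Injective f) (g : G) :
    Nat.card {x : f.range // IsConj g (x : G)} = Nat.card {h : H // IsConj g (f h)} := by
  apply Nat.card_congr
  refine (Equiv.ofBijective (fun h : {h : H // IsConj g (f h)} =>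
    (⟨⟨f h.1, ⟨h.1, rfl⟩⟩, h.2⟩ : {x : f.range // IsConj g (x : G)})) ⟨?_, ?_⟩).symm
  · rintro ⟨h₁, _⟩ ⟨h₂, _⟩ e
    have : f h₁ = f h₂ := by simpa using congrArg (fun x => (x.1 : G)) e
    exact Subtype.ext (hf this)
  · rintro ⟨⟨x, hx⟩, hc⟩
    obtain ⟨h, rfl⟩ := hx
    exact ⟨⟨h, hc⟩, rfl⟩

/-- Perlis' cohomological criterion: in a semidirect product `G = A ⋊[φ] H` with `A`
a finite commutative group and `H` finite, a `1`-cocycle `χ : H → A` that is not a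
`1`-coboundary on `H` but restricts to a `1`-coboundary on every cyclic subgroup of `H`
yields, via `h ↦ (χ h, h)`, a section whose image is Gassmann equivalent to the canonical
copy `σ(H) = {(1, h)}` of `H` but not conjugate to it in `G`. -/
theorem gassmann_equiv_not_conj_of_cocycle
    (A H : Type) [CommGroup A] [Finite A] [Group H] [Finite H]
    (φ : H →* MulAut A) (χ : H → A)
    (hcocycle : ∀ h₁ h₂ : H, χ (h₁ * h₂) = χ h₁ * φ h₁ (χ h₂))
    (hnotcobound : ¬ ∃ a : A, ∀ h : H, χ h = a * (φ h a)⁻¹)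
    (hcyclic : ∀ h : H, ∃ a : A, ∀ k ∈ Subgroup.zpowers h, χ k = a * (φ k a)⁻¹) :
    ∃ f : H →* A ⋊[φ] H,
      (∀ h : H, f h = ⟨χ h, h⟩) ∧
      IsGassmannEquiv f.range (SemidirectProduct.inr (φ := φ)).range ∧
      ¬ ∃ g : A ⋊[φ] H,
          Subgroup.map (MulEquiv.toMonoidHom (MulAut.conj g)) f.range =
            (SemidirectProduct.inr (φ := φ)).range := by
  have hχ1 : χ 1 = 1 := by
    have := hcocycle 1 1
    simp only [one_mul, map_one, MulAut.one_apply] at this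
    exact (left_eq_mul.mp this)
  set f : H →* A ⋊[φ] H :=
    { toFun := fun h => ⟨χ h, h⟩
      map_one' := by ext <;> simp [hχ1]
      map_mul' := fun h₁ h₂ => by
        ext <;> simp [hcocycle, SemidirectProduct.mul_left, SemidirectProduct.mul_right] }
    with hfdef
  have hf : ∀ h : H, f h = (⟨χ h, h⟩ : A ⋊[φ] H) := fun h => rfl
  have finj : Function.Injective f := fun h₁ h₂ e => by
    simpa [hf] using congrArg SemidirectProduct.right e
  have key : ∀ h : H, IsConj ((SemidirectProduct.inr h : A ⋊[φ] H)) (f h) := by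
    intro h
    obtain ⟨a, ha⟩ := hcyclic h
    have hah := ha h (Subgroup.mem_zpowers h)
    rw [isConj_iff]
    refine ⟨SemidirectProduct.inl a, ?_⟩
    ext
    · simp [SemidirectProduct.mul_left, SemidirectProduct.inv_left, hf, hah]
    · simp [SemidirectProduct.mul_right, hf]
  refine ⟨f, hf, ?_, ?_⟩
  · intro g
    rw [card_conj_range f finj g,
      card_conj_range (SemidirectProduct.inr (φ := φ)) SemidirectProduct.inr_injective g]
    apply Nat.card_congr
    exact Equiv.subtypeEquivRight fun h =>
      ⟨fun hc => hc.trans (key h).symm, fun hc => hc.trans (key h)⟩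
  · rintro ⟨g, hg⟩
    apply hnotcobound
    refine ⟨(φ g.right⁻¹ g.left)⁻¹, fun h => ?_⟩
    have hmem : (MulAut.conj g) (f h) ∈ (SemidirectProduct.inr (φ := φ)).range := by
      rw [← hg]
      exact Subgroup.mem_map.mpr ⟨f h, ⟨h, rfl⟩, rfl⟩
    obtain ⟨k, hk⟩ := hmem
    have hleft : ((MulAut.conj g) (f h)).left = 1 := by
      rw [← hk]; rfl
    have hleft' : g.left * φ g.right (χ h) *
        φ (g.right * h * g.right⁻¹) g.left⁻¹ = 1 := by
      simpa [MulAut.conj_apply, SemidirectProduct.mul_left, SemidirectProduct.inv_left,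
        hf, map_mul, mul_assoc] using hleft
    set c := φ g.right⁻¹ g.left with hc
    have comp : ∀ (x y : H) (b : A), φ x (φ y b) = φ (x * y) b := fun x y b => by
      rw [map_mul]; rfl
    have hcapp : φ g.right c = g.left := by
      rw [hc, comp, mul_inv_cancel, map_one, MulAut.one_apply]
    have hc2 : φ g.right (φ h c) = φ (g.right * h * g.right⁻¹) g.left := by
      rw [hc, comp, comp, mul_assoc]
    have main : φ g.right (χ h) = φ g.right (c⁻¹ * φ h c) := by
      rw [map_mul, map_inv, hcapp, hc2]
      rw [map_inv] at hleft'
      exact eq_inv_mul_iff_mul_eq.mpr (mul_inv_eq_one.mp hleft')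
    have hfin := (φ g.right).injective main
    rw [hfin, map_inv, inv_inv]
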